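/- Let X be a J-tangent vector field and let k ≥ 1. The following are equivalent: (a) X commutes at 0 up to order k, i.e. for every m ≤ k, every choice X₁, …, X_m ∈ {X, JX}, and every permutation σ of {1, …, m}, one has (X_{σ(1)}·X_{σ(2)}·⋯·X_{σ(m)})(0) = (X₁·X₂·⋯·X_m)(0); (b) every iterated Lie bracket of the vector fields X and JX with at least 2 and at most k factors vanishes at 0. -/

import Mathlib

open Complex Filter Asymptotics Metric Topology

noncomputable section

/-- `ℝ^{2n}` identified with `ℂ^n`. -/
abbrev E (n : ℕ) : Type := EuclideanSpace ℂ (Fin n)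

/-- `∇_X Y` : the directional derivative of the vector field `Y` in the direction `X`,
with respect to the standard flat connection of `ℝ^{2n}`. -/
def nabla {n : ℕ} (X Y : E n → E n) : E n → E n := fun p => fderiv ℝ Y p (X p)

/-- Lie bracket of vector fields. -/
def lie {n : ℕ} (X Y : E n → E n) : E n → E n := fun p => nabla X Y p - nabla Y X p

/-- The vector field `J X`. -/
def JVF {n : ℕ} (J : E n → (E n →L[ℝ] E n)) (X : E n → E n) : E n → E n := fun p => J p (X p)

/-- The Levi form `L_φ(X) = dφ(J[X, JX])`. -/
def Levi {n : ℕ} (J : E n → (E n →L[ℝ] E n)) (φ : E n → ℝ) (X : E n → E n) : E n → ℝ :=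
  fun p => fderiv ℝ φ p (J p (lie X (JVF J X) p))

/-- `v ∈ T^J_p M`, i.e. `dφ_p v = 0` and `dφ_p (J p v) = 0`. -/
def InTJ {n : ℕ} (J : E n → (E n →L[ℝ] E n)) (φ : E n → ℝ) (p v : E n) : Prop :=
  fderiv ℝ φ p v = 0 ∧ fderiv ℝ φ p (J p v) = 0

/-- A smooth vector field which is `J`-tangent to `M = φ⁻¹(0)`. -/
def JTangent {n : ℕ} (J : E n → (E n →L[ℝ] E n)) (φ : E n → ℝ) (X : E n → E n) : Prop :=
  ContDiff ℝ (⊤ : ℕ∞) X ∧ ∀ p, φ p = 0 → InTJ J φ p (X p)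

/-- A germ of `J`-holomorphic disk: `u` is smooth on the ball of radius `ε > 0` around `0`
and satisfies the Cauchy–Riemann equation `∂u/∂y = J(u) ∂u/∂x` there. -/
def IsJDisk {n : ℕ} (J : E n → (E n →L[ℝ] E n)) (u : ℂ → E n) (ε : ℝ) : Prop :=
  0 < ε ∧ ContDiffOn ℝ (⊤ : ℕ∞) u (ball (0 : ℂ) ε) ∧
    ∀ z ∈ ball (0 : ℂ) ε, fderiv ℝ u z Complex.I = J (u z) (fderiv ℝ u z 1)

/-- `∂f/∂x`. -/
def dx {F : Type*} [NormedAddCommGroup F] [NormedSpace ℝ F] (f : ℂ → F) : ℂ → F :=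
  fun z => fderiv ℝ f z 1

/-- `∂f/∂y`. -/
def dy {F : Type*} [NormedAddCommGroup F] [NormedSpace ℝ F] (f : ℂ → F) : ℂ → F :=
  fun z => fderiv ℝ f z Complex.I

/-- Laplacian `Δ f = ∂²f/∂x² + ∂²f/∂y²`. -/
def lap {F : Type*} [NormedAddCommGroup F] [NormedSpace ℝ F] (f : ℂ → F) : ℂ → F :=
  fun z => dx (dx f) z + dy (dy f) z

/-- `(p,q)`-th mixed derivative `∂^{p+q} f / ∂x^p ∂y^q`. -/
def mixD {F : Type*} [NormedAddCommGroup F] [NormedSpace ℝ F] (p q : ℕ) (f : ℂ → F) : ℂ → F :=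
  dx^[p] (dy^[q] f)

/-- `D^{p,q}_X X = (JX)·⋯·(JX)·X·⋯·X·X` (`q` factors `JX` followed by `p` factors `X`,
applied to `X`). -/
def Dpq {n : ℕ} (J : E n → (E n →L[ℝ] E n)) (X : E n → E n) (p q : ℕ) : E n → E n :=
  (nabla (JVF J X))^[q] ((nabla X)^[p] X)

/-- `X^m = ∇_X(⋯(∇_X X))` with `m` factors (`X^1 = X`). -/
def Xpow {n : ℕ} (X : E n → E n) (m : ℕ) : E n → E n := (nabla X)^[m - 1] X

/-- Iterated Lie brackets with `m` factors taken from the set `S` of vector fields. -/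
inductive IterBrk {n : ℕ} (S : Set (E n → E n)) : ℕ → (E n → E n) → Prop
  | base (W : E n → E n) (hW : W ∈ S) : IterBrk S 1 W
  | brk {m₁ m₂ : ℕ} {W₁ W₂ : E n → E n} (h₁ : IterBrk S m₁ W₁) (h₂ : IterBrk S m₂ W₂) :
      IterBrk S (m₁ + m₂) (lie W₁ W₂)

/-- Right-associated iterated product `X₁·X₂·⋯·X_m` of a list of vector fields. -/
def prodVF {n : ℕ} : List (E n → E n) → (E n → E n)
  | [] => fun _ => 0
  | [X] => X
  | X :: Y :: rest => nabla X (prodVF (Y :: rest))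

end

section Helpers

variable {n : ℕ}

local notation "Sm" => ContDiff ℝ (⊤ : ℕ∞)

lemma letop1 : ((⊤:ℕ∞) : WithTop ℕ∞) + 1 ≤ ((⊤:ℕ∞) : WithTop ℕ∞) := by norm_num

lemma letop2 : (2 : WithTop ℕ∞) ≤ ((⊤:ℕ∞) : WithTop ℕ∞) := by
  rw [show ((2:WithTop ℕ∞)) = ((2:ℕ∞) : WithTop ℕ∞) from rfl]
  exact WithTop.coe_le_coe.mpr le_top

lemma letop0 : (1 : WithTop ℕ∞) ≤ ((⊤:ℕ∞) : WithTop ℕ∞) := le_trans (by norm_num) letop2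

lemma sm_diff {F : Type*} [NormedAddCommGroup F] [NormedSpace ℝ F] {G : E n → F}
    (h : Sm G) : Differentiable ℝ G := h.differentiable (by simp)

lemma sm_nabla {X Y : E n → E n} (hX : Sm X) (hY : Sm Y) : Sm (nabla X Y) :=
  (hY.fderiv_right letop1).clm_apply hX

lemma sm_lie {X Y : E n → E n} (hX : Sm X) (hY : Sm Y) : Sm (lie X Y) :=
  (sm_nabla hX hY).sub (sm_nabla hY hX)

lemma nabla_nabla {X Y Z : E n → E n} (hY : Sm Y) (hZ : Sm Z) (p : E n) :
    nabla X (nabla Y Z) p = fderiv ℝ (fderiv ℝ Z) p (X p) (Y p) + nabla (nabla X Y) Z p := by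
  have hdZ : DifferentiableAt ℝ (fderiv ℝ Z) p :=
    (sm_diff (hZ.fderiv_right letop1)).differentiableAt
  have hdY : DifferentiableAt ℝ Y p := (sm_diff hY).differentiableAt
  show fderiv ℝ (fun q => fderiv ℝ Z q (Y q)) p (X p) = _
  rw [fderiv_clm_apply hdZ hdY]
  simp [nabla, add_comm]

/-- Flatness: `∇_X ∇_Y Z = ∇_Y ∇_X Z + ∇_{[X,Y]} Z`. -/
lemma nabla_comm {X Y Z : E n → E n} (hX : Sm X) (hY : Sm Y) (hZ : Sm Z) :
    nabla X (nabla Y Z) = fun p => nabla Y (nabla X Z) p + nabla (lie X Y) Z p := by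
  funext p
  have hsym : fderiv ℝ (fderiv ℝ Z) p (X p) (Y p) = fderiv ℝ (fderiv ℝ Z) p (Y p) (X p) :=
    (hZ.contDiffAt.isSymmSndFDerivAt (by rw [minSmoothness_of_isRCLikeNormedField]; exact letop2)) (X p) (Y p)
  rw [nabla_nabla hY hZ, nabla_nabla hX hZ, hsym]
  have : nabla (lie X Y) Z p = nabla (nabla X Y) Z p - nabla (nabla Y X) Z p := by
    simp [nabla, lie]
  rw [this]; abel

lemma prodVF_cons (C : E n → E n) {l : List (E n → E n)} (h : l ≠ []) :
    prodVF (C :: l) = nabla C (prodVF l) := by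
  cases l with
  | nil => exact absurd rfl h
  | cons Y r => rfl

lemma sm_prodVF {l : List (E n → E n)} (h : ∀ W ∈ l, Sm W) : Sm (prodVF l) := by
  induction l with
  | nil => exact contDiff_const
  | cons C r ih =>
    cases r with
    | nil => exact h C (by simp)
    | cons Y s =>
      rw [prodVF_cons C (by simp)]
      exact sm_nabla (h C (by simp)) (ih fun W hW => h W (by simp [hW]))

/-- `Lw [C₁,…,Cⱼ] F = ∇_{C₁} ⋯ ∇_{Cⱼ} F`. -/
noncomputable def Lw : List (E n → E n) → (E n → E n) → (E n → E n)
  | [], F => F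
  | C :: u, F => nabla C (Lw u F)

lemma sm_Lw {u : List (E n → E n)} {F : E n → E n} (hu : ∀ f ∈ u, Sm f) (hF : Sm F) :
    Sm (Lw u F) := by
  induction u with
  | nil => exact hF
  | cons C v ih =>
    exact sm_nabla (hu C (by simp)) (ih fun f hf => hu f (by simp [hf]))

lemma Lw_append (u v : List (E n → E n)) (F : E n → E n) :
    Lw (u ++ v) F = Lw u (Lw v F) := by
  induction u with
  | nil => rfl
  | cons C w ih =>
    show nabla C (Lw (w ++ v) F) = nabla C (Lw w (Lw v F))
    rw [ih]

lemma Lw_prodVF (v : List (E n → E n)) {w : List (E n → E n)} (hw : w ≠ []) :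
    Lw v (prodVF w) = prodVF (v ++ w) := by
  induction v with
  | nil => rfl
  | cons C u ih =>
    have hne : u ++ w ≠ [] := by simp [hw]
    simp only [Lw, ih, List.cons_append, prodVF_cons C hne]

lemma nabla_add_fun {C F G : E n → E n} (hF : Sm F) (hG : Sm G) :
    nabla C (fun p => F p + G p) = fun p => nabla C F p + nabla C G p := by
  funext p
  show fderiv ℝ (fun q => F q + G q) p (C p) = _
  rw [fderiv_fun_add (sm_diff hF).differentiableAt (sm_diff hG).differentiableAt]
  rfl

lemma Lw_add {u : List (E n → E n)} {F G : E n → E n} (hu : ∀ f ∈ u, Sm f)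
    (hF : Sm F) (hG : Sm G) :
    Lw u (fun p => F p + G p) = fun p => Lw u F p + Lw u G p := by
  induction u with
  | nil => rfl
  | cons C v ih =>
    have hv : ∀ f ∈ v, Sm f := fun f hf => hu f (by simp [hf])
    show nabla C (Lw v fun p => F p + G p) = _
    rw [ih hv]
    exact nabla_add_fun (sm_Lw hv hF) (sm_Lw hv hG)

/-- Generic evaluation of a formal linear combination of "words". -/
noncomputable def evI (T : List (E n → E n) → E n → E n)
    (c : List (ℝ × List (E n → E n))) : E n → E n :=
  fun p => (c.map fun aw => aw.1 • T aw.2 p).sum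

lemma evI_cons (T : List (E n → E n) → E n → E n) (aw) (c) :
    evI T (aw :: c) = fun p => aw.1 • T aw.2 p + evI T c p := rfl

lemma sm_evI {T : List (E n → E n) → E n → E n} {c : List (ℝ × List (E n → E n))}
    (hT : ∀ aw ∈ c, Sm (T aw.2)) : Sm (evI T c) := by
  induction c with
  | nil => exact contDiff_const
  | cons aw c ih =>
    rw [evI_cons]
    exact ((hT aw (by simp)).const_smul aw.1).add (ih fun x hx => hT x (by simp [hx]))

lemma nabla_smul_fun {C F : E n → E n} (a : ℝ) (hF : Sm F) :
    nabla C (fun p => a • F p) = fun p => a • nabla C F p := by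
  funext p
  show fderiv ℝ (fun q => a • F q) p (C p) = _
  rw [fderiv_fun_const_smul (sm_diff hF).differentiableAt]
  rfl

lemma nabla_evI (Y : E n → E n) {T : List (E n → E n) → E n → E n}
    {c : List (ℝ × List (E n → E n))} (hT : ∀ aw ∈ c, Sm (T aw.2)) :
    nabla Y (evI T c) = evI (fun w => nabla Y (T w)) c := by
  induction c with
  | nil =>
    funext p
    show fderiv ℝ (fun _ => (0 : E n)) p (Y p) = 0
    simp
  | cons aw c ih =>
    have h1 : Sm (T aw.2) := hT aw (by simp)
    have h2 : ∀ x ∈ c, Sm (T x.2) := fun x hx => hT x (by simp [hx])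
    rw [evI_cons, nabla_add_fun (h1.const_smul aw.1) (sm_evI h2),
      nabla_smul_fun aw.1 h1, ih h2, evI_cons]

lemma Lw_evI (u : List (E n → E n)) {T : List (E n → E n) → E n → E n}
    {c : List (ℝ × List (E n → E n))} (hu : ∀ f ∈ u, Sm f)
    (hT : ∀ aw ∈ c, Sm (T aw.2)) :
    Lw u (evI T c) = evI (fun w => Lw u (T w)) c := by
  induction u with
  | nil => rfl
  | cons C v ih =>
    have hv : ∀ f ∈ v, Sm f := fun f hf => hu f (by simp [hf])
    show nabla C (Lw v (evI T c)) = _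
    rw [ih hv, nabla_evI C (fun aw haw => sm_Lw hv (hT aw haw))]
    rfl

lemma evI_append (T : List (E n → E n) → E n → E n) (c d : List (ℝ × List (E n → E n))) :
    evI T (c ++ d) = fun p => evI T c p + evI T d p := by
  funext p; simp [evI]

/-- Negation of a formal combination. -/
def negL (c : List (ℝ × List (E n → E n))) : List (ℝ × List (E n → E n)) :=
  c.map fun aw => (-aw.1, aw.2)

lemma evI_negL (T : List (E n → E n) → E n → E n) (c : List (ℝ × List (E n → E n))) :
    evI T (negL c) = fun p => -(evI T c p) := by
  funext p
  induction c with
  | nil => simp [evI, negL]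
  | cons aw c ih =>
    show (-aw.1) • T aw.2 p + evI T (negL c) p = _
    rw [ih]
    show _ = -(aw.1 • T aw.2 p + evI T c p)
    rw [neg_smul, neg_add]

/-- Formal product of combinations: `combo d c` evaluates (for suitable `T`) to
`Σ_{(a,w)∈c} a • Σ_{(b,v)∈d} b • T (v ++ w)`. -/
def combo (d c : List (ℝ × List (E n → E n))) : List (ℝ × List (E n → E n)) :=
  c.flatMap fun aw => d.map fun bv => (aw.1 * bv.1, bv.2 ++ aw.2)

lemma mem_combo {d c : List (ℝ × List (E n → E n))} {x : ℝ × List (E n → E n)}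
    (hx : x ∈ combo d c) :
    ∃ aw ∈ c, ∃ bv ∈ d, x = (aw.1 * bv.1, bv.2 ++ aw.2) := by
  rcases List.mem_flatMap.mp hx with ⟨aw, haw, hx2⟩
  rcases List.mem_map.mp hx2 with ⟨bv, hbv, hx3⟩
  exact ⟨aw, haw, bv, hbv, hx3.symm⟩

lemma evI_map_mul (T : List (E n → E n) → E n → E n) (a : ℝ) (w : List (E n → E n))
    (d : List (ℝ × List (E n → E n))) (p : E n) :
    evI T (d.map fun bv => (a * bv.1, bv.2 ++ w)) p
      = a • (d.map fun bv => bv.1 • T (bv.2 ++ w) p).sum := by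
  induction d with
  | nil => simp [evI]
  | cons bv d ihd =>
    simp only [List.map_cons, evI_cons, List.sum_cons, smul_add]
    rw [ihd, mul_smul]

lemma evI_combo (T : List (E n → E n) → E n → E n) (d c : List (ℝ × List (E n → E n)))
    (p : E n) :
    evI T (combo d c) p
      = (c.map fun aw => aw.1 • (d.map fun bv => bv.1 • T (bv.2 ++ aw.2) p).sum).sum := by
  induction c with
  | nil => simp [evI, combo]
  | cons aw c ih =>
    have hsplit : combo d (aw :: c)
        = (d.map fun bv => (aw.1 * bv.1, bv.2 ++ aw.2)) ++ combo d c := by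
      simp [combo]
    rw [show evI T (combo d (aw :: c)) p
        = evI T (d.map fun bv => (aw.1 * bv.1, bv.2 ++ aw.2)) p + evI T (combo d c) p by
      rw [hsplit, evI_append]]
    rw [ih]
    simp only [List.map_cons, List.sum_cons]
    congr 1
    exact evI_map_mul T aw.1 aw.2 d p

/-- Sum of the coefficients of a formal combination. -/
def csum (c : List (ℝ × List (E n → E n))) : ℝ := (c.map Prod.fst).sum

lemma csum_append (c d : List (ℝ × List (E n → E n))) :
    csum (c ++ d) = csum c + csum d := by simp [csum]

lemma csum_negL (c : List (ℝ × List (E n → E n))) : csum (negL c) = -csum c := by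
  induction c with
  | nil => simp [csum, negL]
  | cons aw c ih =>
    show -aw.1 + csum (negL c) = -(aw.1 + csum c)
    rw [ih]; ring

lemma csum_map_mul (a : ℝ) (w : List (E n → E n)) (d : List (ℝ × List (E n → E n))) :
    csum (d.map fun bv => (a * bv.1, bv.2 ++ w)) = a * csum d := by
  induction d with
  | nil => simp [csum]
  | cons bv d ihd =>
    show a * bv.1 + csum (d.map fun bv => (a * bv.1, bv.2 ++ w)) = _
    rw [ihd]
    show _ = a * (bv.1 + csum d)
    ring

lemma csum_combo (d c : List (ℝ × List (E n → E n))) :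
    csum (combo d c) = csum c * csum d := by
  induction c with
  | nil => simp [csum, combo]
  | cons aw c ih =>
    have h1 : combo d (aw :: c) = (d.map fun bv => (aw.1 * bv.1, bv.2 ++ aw.2)) ++ combo d c := by
      simp [combo]
    rw [h1, csum_append, ih, csum_map_mul]
    show _ = (aw.1 + csum c) * csum d
    ring

lemma evI_const {T : List (E n → E n) → E n → E n} {c : List (ℝ × List (E n → E n))}
    {p : E n} {P : E n} (h : ∀ aw ∈ c, T aw.2 p = P) :
    evI T c p = csum c • P := by
  induction c with
  | nil => simp [evI, csum]
  | cons aw c ih =>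
    show aw.1 • T aw.2 p + evI T c p = _
    rw [h aw (by simp), ih (fun x hx => h x (by simp [hx]))]
    show _ = (aw.1 + csum c) • P
    rw [add_smul]

end Helpers

section Mains

variable {n : ℕ}

local notation "Sm" => ContDiff ℝ (⊤ : ℕ∞)

lemma Lw_snoc (u : List (E n → E n)) (C F : E n → E n) :
    Lw (u ++ [C]) F = Lw u (nabla C F) := by
  rw [Lw_append]; rfl

lemma iterbrk_pos {S : Set (E n → E n)} {m : ℕ} {W : E n → E n}
    (h : IterBrk S m W) : 1 ≤ m := by
  induction h with
  | base => exact le_refl 1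
  | brk h₁ h₂ ih₁ ih₂ => omega

lemma sm_iterbrk {S : Set (E n → E n)} (hS : ∀ f ∈ S, Sm f) {m : ℕ} {W : E n → E n}
    (h : IterBrk S m W) : Sm W := by
  induction h with
  | base W hW => exact hS W hW
  | brk h₁ h₂ ih₁ ih₂ => exact sm_lie ih₁ ih₂

lemma perm_ne_nil {l w : List (E n → E n)} (h : w.Perm l) (hl : l ≠ []) : w ≠ [] := by
  intro hw
  apply hl
  rw [hw] at h
  exact h.symm.eq_nil

lemma nabla_rep_field {S : Set (E n → E n)} (hS : ∀ f ∈ S, Sm f)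
    {B₁ B₂ : E n → E n} {c₂ d₁ : List (ℝ × List (E n → E n))} {l₂ : List (E n → E n)}
    (hl₂S : ∀ f ∈ l₂, f ∈ S) (hl₂ne : l₂ ≠ [])
    (hc₂p : ∀ aw ∈ c₂, aw.2.Perm l₂)
    (hc₂e : B₂ = evI prodVF c₂)
    (hd₁e : ∀ Z, Sm Z → nabla B₁ Z = evI (fun v => Lw v Z) d₁) :
    nabla B₁ B₂ = evI prodVF (combo d₁ c₂) := by
  funext p
  have hsm : ∀ aw ∈ c₂, Sm (prodVF aw.2) := fun aw haw =>
    sm_prodVF fun f hf => hS f (hl₂S f ((hc₂p aw haw).subset hf))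
  rw [hc₂e, nabla_evI B₁ hsm, evI_combo]
  show (c₂.map fun aw => aw.1 • nabla B₁ (prodVF aw.2) p).sum = _
  apply congrArg List.sum
  apply List.map_congr_left
  intro aw haw
  congr 1
  have hne : aw.2 ≠ [] := perm_ne_nil (hc₂p aw haw) hl₂ne
  rw [hd₁e (prodVF aw.2) (hsm aw haw)]
  show (d₁.map fun bv => bv.1 • Lw bv.2 (prodVF aw.2) p).sum = _
  apply congrArg List.sum
  apply List.map_congr_left
  intro bv _
  rw [Lw_prodVF bv.2 hne]

lemma nabla_rep_op {S : Set (E n → E n)} (hS : ∀ f ∈ S, Sm f)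
    {B₁ B₂ : E n → E n} {d₂ d₁ : List (ℝ × List (E n → E n))} {l₂ : List (E n → E n)}
    (hl₂S : ∀ f ∈ l₂, f ∈ S)
    (hd₂p : ∀ aw ∈ d₂, aw.2.Perm l₂)
    (hd₂e : ∀ Z, Sm Z → nabla B₂ Z = evI (fun v => Lw v Z) d₂)
    (hd₁e : ∀ Z, Sm Z → nabla B₁ Z = evI (fun v => Lw v Z) d₁)
    {Z : E n → E n} (hZ : Sm Z) :
    nabla B₁ (nabla B₂ Z) = evI (fun v => Lw v Z) (combo d₁ d₂) := by
  funext p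
  have hsm : ∀ aw ∈ d₂, Sm (Lw aw.2 Z) := fun aw haw =>
    sm_Lw (fun f hf => hS f (hl₂S f ((hd₂p aw haw).subset hf))) hZ
  rw [hd₂e Z hZ, nabla_evI B₁ hsm, evI_combo]
  show (d₂.map fun aw => aw.1 • nabla B₁ (Lw aw.2 Z) p).sum = _
  apply congrArg List.sum
  apply List.map_congr_left
  intro aw haw
  congr 1
  rw [hd₁e (Lw aw.2 Z) (hsm aw haw)]
  show (d₁.map fun bv => bv.1 • Lw bv.2 (Lw aw.2 Z) p).sum = _
  apply congrArg List.sum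
  apply List.map_congr_left
  intro bv _
  rw [← Lw_append]

/-- Representation of an iterated bracket (and of covariant differentiation along it)
as a formal linear combination of right-associated products of permutations of its
leaves, with total coefficient `0` (resp. `1` for a single leaf). -/
lemma brk_rep {S : Set (E n → E n)} (hS : ∀ f ∈ S, Sm f) {m : ℕ} {W : E n → E n}
    (hB : IterBrk S m W) :
    ∃ l : List (E n → E n), l.length = m ∧ (∀ f ∈ l, f ∈ S) ∧
      (∃ c : List (ℝ × List (E n → E n)), (∀ aw ∈ c, aw.2.Perm l) ∧
        csum c = (if m = 1 then (1:ℝ) else 0) ∧ W = evI prodVF c) ∧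
      (∃ d : List (ℝ × List (E n → E n)), (∀ aw ∈ d, aw.2.Perm l) ∧
        csum d = (if m = 1 then (1:ℝ) else 0) ∧
        ∀ Z, Sm Z → nabla W Z = evI (fun v => Lw v Z) d) := by
  induction hB with
  | base W hW =>
    refine ⟨[W], rfl, by simpa using hW, ⟨[(1, [W])], ?_, by simp [csum], ?_⟩,
      ⟨[(1, [W])], ?_, by simp [csum], ?_⟩⟩
    · intro aw haw; simp at haw; rw [haw]
    · funext p; simp [evI, prodVF]
    · intro aw haw; simp at haw; rw [haw]
    · intro Z hZ; funext p; simp [evI, Lw]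
  | brk h₁ h₂ ih₁ ih₂ =>
    rename_i m₁ m₂ B₁ B₂
    obtain ⟨l₁, hl₁len, hl₁S, ⟨c₁, hc₁p, hc₁s, hc₁e⟩, ⟨d₁, hd₁p, hd₁s, hd₁e⟩⟩ := ih₁
    obtain ⟨l₂, hl₂len, hl₂S, ⟨c₂, hc₂p, hc₂s, hc₂e⟩, ⟨d₂, hd₂p, hd₂s, hd₂e⟩⟩ := ih₂
    have hm₁ : 1 ≤ m₁ := iterbrk_pos h₁
    have hm₂ : 1 ≤ m₂ := iterbrk_pos h₂
    have hsmB₁ : Sm B₁ := sm_iterbrk hS h₁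
    have hsmB₂ : Sm B₂ := sm_iterbrk hS h₂
    have hl₁ne : l₁ ≠ [] := by
      intro h; rw [h] at hl₁len; simp at hl₁len; omega
    have hl₂ne : l₂ ≠ [] := by
      intro h; rw [h] at hl₂len; simp at hl₂len; omega
    refine ⟨l₁ ++ l₂, by simp [hl₁len, hl₂len], ?_, ?_, ?_⟩
    · intro f hf
      rcases List.mem_append.mp hf with h | h
      · exact hl₁S f h
      · exact hl₂S f h
    · -- field representation
      refine ⟨combo d₁ c₂ ++ negL (combo d₂ c₁), ?_, ?_, ?_⟩
      · intro aw haw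
        rcases List.mem_append.mp haw with h | h
        · obtain ⟨a, ha, b, hb, he⟩ := mem_combo h
          rw [he]
          exact ((hd₁p b hb).append (hc₂p a ha))
        · obtain ⟨y, hy, he⟩ := List.mem_map.mp h
          obtain ⟨a, ha, b, hb, he2⟩ := mem_combo hy
          rw [← he]
          have : y.2.Perm (l₂ ++ l₁) := by
            rw [he2]
            exact (hd₂p b hb).append (hc₁p a ha)
          exact this.trans List.perm_append_comm
      · rw [csum_append, csum_negL, csum_combo, csum_combo, hc₁s, hc₂s, hd₁s, hd₂s,
          if_neg (show ¬(m₁ + m₂ = 1) by omega)]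
        ring
      · funext p
        show nabla B₁ B₂ p - nabla B₂ B₁ p = _
        rw [nabla_rep_field hS hl₂S hl₂ne hc₂p hc₂e hd₁e,
          nabla_rep_field hS hl₁S hl₁ne hc₁p hc₁e hd₂e]
        simp only [evI_append, evI_negL]
        exact sub_eq_add_neg _ _
    · -- operator representation
      refine ⟨combo d₁ d₂ ++ negL (combo d₂ d₁), ?_, ?_, ?_⟩
      · intro aw haw
        rcases List.mem_append.mp haw with h | h
        · obtain ⟨a, ha, b, hb, he⟩ := mem_combo h
          rw [he]
          exact ((hd₁p b hb).append (hd₂p a ha))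
        · obtain ⟨y, hy, he⟩ := List.mem_map.mp h
          obtain ⟨a, ha, b, hb, he2⟩ := mem_combo hy
          rw [← he]
          have : y.2.Perm (l₂ ++ l₁) := by
            rw [he2]
            exact (hd₂p b hb).append (hd₁p a ha)
          exact this.trans List.perm_append_comm
      · rw [csum_append, csum_negL, csum_combo, csum_combo, hd₁s, hd₂s,
          if_neg (show ¬(m₁ + m₂ = 1) by omega)]
        ring
      · intro Z hZ
        funext p
        have hcomm := congrFun (nabla_comm hsmB₁ hsmB₂ hZ) p
        have hmain : nabla (lie B₁ B₂) Z p
            = nabla B₁ (nabla B₂ Z) p - nabla B₂ (nabla B₁ Z) p := by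
          rw [hcomm]; abel
        rw [hmain, nabla_rep_op hS hl₂S hd₂p hd₂e hd₁e hZ,
          nabla_rep_op hS hl₁S hd₁p hd₁e hd₂e hZ]
        simp only [evI_append, evI_negL]
        exact sub_eq_add_neg _ _

/-- If all iterated brackets with at most `k` factors vanish at `0`, then so do all
their `Lw`-derivatives of permissible order, and derivatives along them. -/
lemma BL {S : Set (E n → E n)} (hS : ∀ f ∈ S, Sm f) {k : ℕ}
    (hb : ∀ (m : ℕ) (W : E n → E n), 2 ≤ m → m ≤ k → IterBrk S m W → W 0 = 0) :
    ∀ u : List (E n → E n), (∀ f ∈ u, f ∈ S) →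
      ∀ (m : ℕ) (W : E n → E n), IterBrk S m W → 2 ≤ m → u.length + m ≤ k →
        Lw u W 0 = 0 ∧ ∀ Z, Sm Z → Lw u (nabla W Z) 0 = 0 := by
  intro u
  induction u using List.reverseRecOn with
  | nil =>
    intro _ m W hW h2 hk
    have hW0 : W 0 = 0 := hb m W h2 (by simpa using hk) hW
    refine ⟨hW0, fun Z hZ => ?_⟩
    show fderiv ℝ Z 0 (W 0) = 0
    rw [hW0]
    exact (fderiv ℝ Z 0).map_zero
  | append_singleton u C ih =>
    intro huS m W hW h2 hk
    have hCS : C ∈ S := huS C (by simp)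
    have huS' : ∀ f ∈ u, f ∈ S := fun f hf => huS f (by simp [hf])
    have hsmu : ∀ f ∈ u, Sm f := fun f hf => hS f (huS' f hf)
    have hsmC : Sm C := hS C hCS
    have hsmW : Sm W := sm_iterbrk hS hW
    have hlen : u.length + 1 + m ≤ k := by simpa using hk
    have hbrk : IterBrk S (1 + m) (lie C W) := IterBrk.brk (IterBrk.base C hCS) hW
    constructor
    · rw [Lw_snoc]
      have hdecomp : nabla C W = fun p => lie C W p + nabla W C p := by
        funext p
        show nabla C W p = (nabla C W p - nabla W C p) + nabla W C p
        abel
      rw [hdecomp, Lw_add hsmu (sm_lie hsmC hsmW) (sm_nabla hsmW hsmC)]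
      show Lw u (lie C W) 0 + Lw u (nabla W C) 0 = 0
      rw [(ih huS' (1 + m) (lie C W) hbrk (by omega) (by omega)).1,
        (ih huS' m W hW h2 (by omega)).2 C hsmC, add_zero]
    · intro Z hZ
      rw [Lw_snoc]
      rw [nabla_comm hsmC hsmW hZ,
        Lw_add hsmu (sm_nabla hsmW (sm_nabla hsmC hZ)) (sm_nabla (sm_lie hsmC hsmW) hZ)]
      show Lw u (nabla W (nabla C Z)) 0 + Lw u (nabla (lie C W) Z) 0 = 0
      rw [(ih huS' m W hW h2 (by omega)).2 (nabla C Z) (sm_nabla hsmC hZ),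
        (ih huS' (1 + m) (lie C W) hbrk (by omega) (by omega)).2 Z hZ, add_zero]

lemma perm_lemma {S : Set (E n → E n)} (hS : ∀ f ∈ S, Sm f) {k : ℕ}
    (hb : ∀ (m : ℕ) (W : E n → E n), 2 ≤ m → m ≤ k → IterBrk S m W → W 0 = 0) :
    ∀ {l₁ l₂ : List (E n → E n)}, l₁.Perm l₂ → (∀ f ∈ l₁, f ∈ S) →
      ∀ u : List (E n → E n), (∀ f ∈ u, f ∈ S) → u.length + l₁.length ≤ k →
        Lw u (prodVF l₁) 0 = Lw u (prodVF l₂) 0 := by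
  intro l₁ l₂ hperm
  induction hperm with
  | nil => intro _ u _ _; rfl
  | cons x h ih =>
    rename_i t₁ t₂
    intro hS₁ u huS hlen
    by_cases hnil : t₁ = []
    · have ht₂ : t₂ = [] := by
        rw [hnil] at h
        exact h.symm.eq_nil
      rw [hnil, ht₂]
    · have ht₂ne : t₂ ≠ [] := perm_ne_nil h.symm hnil
      rw [prodVF_cons x hnil, prodVF_cons x ht₂ne, ← Lw_snoc, ← Lw_snoc]
      have hxS : x ∈ S := hS₁ x (by simp)
      refine ih (fun f hf => hS₁ f (by simp [hf])) (u ++ [x]) ?_ ?_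
      · intro f hf
        rcases List.mem_append.mp hf with hf | hf
        · exact huS f hf
        · simp at hf; rw [hf]; exact hxS
      · simp at hlen ⊢
        omega
  | swap x y l =>
    intro hS₁ u huS hlen
    have hxS : Sm x := hS x (hS₁ x (by simp))
    have hyS : Sm y := hS y (hS₁ y (by simp))
    have huS' : ∀ f ∈ u, f ∈ S := huS
    have hsmu : ∀ f ∈ u, Sm f := fun f hf => hS f (huS f hf)
    have hbrk : IterBrk S (1 + 1) (lie y x) :=
      IterBrk.brk (IterBrk.base y (hS₁ y (by simp))) (IterBrk.base x (hS₁ x (by simp)))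
    by_cases hnil : l = []
    · subst hnil
      show Lw u (nabla y x) 0 = Lw u (nabla x y) 0
      have hdecomp : nabla y x = fun p => lie y x p + nabla x y p := by
        funext p
        show nabla y x p = (nabla y x p - nabla x y p) + nabla x y p
        abel
      rw [hdecomp, Lw_add hsmu (sm_lie hyS hxS) (sm_nabla hxS hyS)]
      show Lw u (lie y x) 0 + Lw u (nabla x y) 0 = _
      rw [(BL hS hb u huS' (1 + 1) (lie y x) hbrk le_rfl (by simp at hlen ⊢; omega)).1,
        zero_add]
    · have hsmP : Sm (prodVF l) := sm_prodVF fun f hf => hS f (hS₁ f (by simp [hf]))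
      rw [prodVF_cons y (by simp [hnil]), prodVF_cons x hnil,
        prodVF_cons x (by simp [hnil]), prodVF_cons y hnil]
      rw [nabla_comm hyS hxS hsmP,
        Lw_add hsmu (sm_nabla hxS (sm_nabla hyS hsmP)) (sm_nabla (sm_lie hyS hxS) hsmP)]
      show Lw u (nabla x (nabla y (prodVF l))) 0 + Lw u (nabla (lie y x) (prodVF l)) 0 = _
      rw [(BL hS hb u huS' (1 + 1) (lie y x) hbrk le_rfl
          (by simp at hlen ⊢; omega)).2 (prodVF l) hsmP, add_zero]
  | trans h₁ h₂ ih₁ ih₂ =>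
    rename_i t₁ t₂ t₃
    intro hS₁ u huS hlen
    have hS₂ : ∀ f ∈ t₂, f ∈ S := fun f hf => hS₁ f (h₁.symm.subset hf)
    rw [ih₁ hS₁ u huS hlen, ih₂ hS₂ u huS (by rw [← h₁.length_eq]; exact hlen)]

end Mains


/-- a `J`-tangent vector field `X` commutes at `0` up to order `k` (all
right-associated products of `≤ k` factors from `{X, JX}` are invariant at `0` under
permutation of the factors) iff all iterated Lie brackets of `X` and `JX` with `2, …, k`
factors vanish at `0`. -/
theorem commutes_iff_brackets_vanish {n : ℕ} (J : E n → (E n →L[ℝ] E n)) (φ : E n → ℝ)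
    (hJsmooth : ContDiff ℝ (⊤ : ℕ∞) J) (hJ2 : ∀ x v, J x (J x v) = -v)
    (hJ0 : ∀ v : E n, J 0 v = Complex.I • v)
    (hφsmooth : ContDiff ℝ (⊤ : ℕ∞) φ) (hφ0 : φ 0 = 0)
    (hreg : ∀ x, φ x = 0 → fderiv ℝ φ x ≠ 0)
    (X : E n → E n) (hX : JTangent J φ X) (k : ℕ) (hk : 1 ≤ k) :
    (∀ l : List (E n → E n), l.length ≤ k → (∀ W ∈ l, W = X ∨ W = JVF J X) →
        ∀ l' : List (E n → E n), l'.Perm l → prodVF l' 0 = prodVF l 0) ↔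
    (∀ (m : ℕ) (W : E n → E n), 2 ≤ m → m ≤ k →
        IterBrk {X, JVF J X} m W → W 0 = 0) := by
  have hmemS : ∀ f : E n → E n, f ∈ ({X, JVF J X} : Set (E n → E n)) ↔
      (f = X ∨ f = JVF J X) := by
    intro f
    simp [Set.mem_insert_iff]
  have hSsm : ∀ f ∈ ({X, JVF J X} : Set (E n → E n)), ContDiff ℝ (⊤ : ℕ∞) f := by
    intro f hf
    rcases (hmemS f).mp hf with h | h
    · rw [h]; exact hX.1
    · rw [h]; exact hJsmooth.clm_apply hX.1
  constructor
  · intro ha m W h2 hm hB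
    obtain ⟨l, hlen, hlS, ⟨c, hcp, hcs, hce⟩, -⟩ := brk_rep hSsm hB
    have h0 : W 0 = evI prodVF c 0 := congrFun hce 0
    rw [h0,
      evI_const (fun aw haw =>
        ha l (by omega) (fun f hf => (hmemS f).mp (hlS f hf)) aw.2 (hcp aw haw)),
      hcs, if_neg (by omega), zero_smul]
  · intro hb l hlen hlS l' hperm
    have hl'S : ∀ f ∈ l', f ∈ ({X, JVF J X} : Set (E n → E n)) :=
      fun f hf => (hmemS f).mpr (hlS f (hperm.subset hf))
    exact perm_lemma hSsm hb hperm hl'S [] (by simp)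
      (by simp [hperm.length_eq]; omega)
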